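/- Let G be a finite simple graph on n vertices in which every vertex has positive degree that is edge transitive: for any two edges e_1, e_2 of G there exists a graph automorphism of G mapping e_1 onto e_2. Let v_1, …, v_n be an orthonormal basis of ℝ^n consisting of eigenvectors of the normalized Laplacian L with L v_i = λ_i v_i, and for a pair of vertices {x,y} define dK/d{x,y} := Σ_{i : λ_i ≠ 0} −(1/λ_i²)·F(v_i, λ_i, {x,y}). Then for every edge {x,y} of G, dK/d{x,y} = 0. -/

import Mathlib

open Finset Matrix Polynomial

variable {V : Type*} [Fintype V] [DecidableEq V]

/-- The normalized Laplacian `L = I - D^{-1/2} A D^{-1/2}` of a simple graph. -/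
noncomputable def normLap (G : SimpleGraph V) [DecidableRel G.Adj] : Matrix V V ℝ :=
  fun x y =>
    if x = y then 1
    else if G.Adj x y then -(1 / Real.sqrt ((G.degree x : ℝ) * (G.degree y : ℝ)))
    else 0

/-- The Aksoy–Purvine–Young edge-derivative expression
`F(v, λ, {x,y}) = (1-λ)(v_x²/d_x + v_y²/d_y) − 2 v_x v_y / √(d_x d_y)`. -/
noncomputable def edgeDeriv (G : SimpleGraph V) [DecidableRel G.Adj]
    (v : V → ℝ) (lam : ℝ) (x y : V) : ℝ :=
  (1 - lam) * (v x ^ 2 / (G.degree x : ℝ) + v y ^ 2 / (G.degree y : ℝ))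
    - 2 * (v x * v y) / Real.sqrt ((G.degree x : ℝ) * (G.degree y : ℝ))

/-- The edge derivative of Kemeny's constant with respect to the pair `{x,y}`:
`dK/d{x,y} = Σ_{i : λ_i ≠ 0} −(1/λ_i²) F(v_i, λ_i, {x,y})`. -/
noncomputable def kemenyDeriv (G : SimpleGraph V) [DecidableRel G.Adj] {n : ℕ}
    (w : Fin n → V → ℝ) (lam : Fin n → ℝ) (x y : V) : ℝ :=
  ∑ i, if lam i = 0 then 0 else -(1 / lam i ^ 2) * edgeDeriv G (w i) (lam i) x y

/-! ### Auxiliary lemmas -/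

lemma NL.degree_map (G : SimpleGraph V) [DecidableRel G.Adj] (φ : G ≃g G) (z : V) :
    G.degree (φ z) = G.degree z := by
  rw [← SimpleGraph.card_neighborSet_eq_degree, ← SimpleGraph.card_neighborSet_eq_degree]
  exact (Fintype.card_congr (φ.mapNeighborSet z)).symm

lemma NL.normLap_map (G : SimpleGraph V) [DecidableRel G.Adj] (φ : G ≃g G) (x y : V) :
    normLap G (φ x) (φ y) = normLap G x y := by
  unfold normLap
  rw [NL.degree_map G φ x, NL.degree_map G φ y]
  by_cases h : x = y
  · simp [h]
  · have h' : ¬ (φ x = φ y) := fun hc => h (φ.toEquiv.injective hc)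
    by_cases ha : G.Adj x y
    · simp [h, h', ha, φ.map_adj_iff.mpr ha]
    · have ha' : ¬ G.Adj (φ x) (φ y) := fun hc => ha (φ.map_adj_iff.mp hc)
      simp [h, h', ha, ha']

/-- Expansion of the normalized Laplacian acting on a vector. -/
lemma NL.mulVec_eq (G : SimpleGraph V) [DecidableRel G.Adj] (v : V → ℝ) (c : V) :
    (normLap G).mulVec v c
      = v c - ∑ d ∈ G.neighborFinset c,
          v d / Real.sqrt ((G.degree c : ℝ) * (G.degree d : ℝ)) := by
  have : ∀ z : V, normLap G c z * v z
      = (if z = c then v z else 0)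
        + (if G.Adj c z then -(v z / Real.sqrt ((G.degree c : ℝ) * (G.degree z : ℝ))) else 0) := by
    intro z
    unfold normLap
    by_cases h : c = z
    · subst h; simp [G.irrefl]
    · have h' : ¬ (z = c) := fun hc => h hc.symm
      by_cases ha : G.Adj c z
      · simp [h, h', ha]; ring
      · simp [h, h', ha]
  unfold Matrix.mulVec dotProduct
  rw [Finset.sum_congr rfl (fun z _ => this z), Finset.sum_add_distrib]
  congr 1
  · simp
  · rw [SimpleGraph.neighborFinset_eq_filter, Finset.sum_filter]
    rw [← Finset.sum_neg_distrib]
    exact Finset.sum_congr rfl (fun z _ => by by_cases ha : G.Adj c z <;> simp [ha])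

/-- The key local eigenvector identity at a vertex. -/
lemma NL.eigen_local (G : SimpleGraph V) [DecidableRel G.Adj] {v : V → ℝ} {lam : ℝ}
    (h : (normLap G).mulVec v = lam • v) (c : V) :
    ∑ d ∈ G.neighborFinset c, v d / Real.sqrt ((G.degree c : ℝ) * (G.degree d : ℝ))
      = (1 - lam) * v c := by
  have h1 : (normLap G).mulVec v c = lam * v c := by rw [h]; rfl
  rw [NL.mulVec_eq] at h1
  linarith

/-- Swapping a double sum over adjacent ordered pairs. -/
lemma NL.adj_sum_comm (G : SimpleGraph V) [DecidableRel G.Adj] (g : V → V → ℝ) :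
    ∑ c, ∑ d ∈ G.neighborFinset c, g c d = ∑ d, ∑ c ∈ G.neighborFinset d, g c d := by
  simp only [SimpleGraph.neighborFinset_eq_filter, Finset.sum_filter]
  rw [Finset.sum_comm]
  refine Finset.sum_congr rfl fun d _ => Finset.sum_congr rfl fun c _ => ?_
  exact if_congr (G.adj_comm c d) rfl rfl

/-- The sum of the edge-derivative expression over all ordered adjacent pairs vanishes. -/
lemma NL.F_sum_zero (G : SimpleGraph V) [DecidableRel G.Adj]
    (hdeg : ∀ z : V, 0 < G.degree z) {v : V → ℝ} {lam : ℝ}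
    (h : (normLap G).mulVec v = lam • v) :
    ∑ c, ∑ d ∈ G.neighborFinset c, edgeDeriv G v lam c d = 0 := by
  have hdz : ∀ z : V, ((G.degree z : ℝ)) ≠ 0 := fun z =>
    Nat.cast_ne_zero.mpr (hdeg z).ne'
  have expand : ∀ c, ∀ d ∈ G.neighborFinset c, edgeDeriv G v lam c d
      = (1 - lam) * v c ^ 2 / (G.degree c : ℝ) + (1 - lam) * v d ^ 2 / (G.degree d : ℝ)
        - 2 * v c * (v d / Real.sqrt ((G.degree c : ℝ) * (G.degree d : ℝ))) := by
    intro c d _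
    unfold edgeDeriv
    ring
  calc ∑ c, ∑ d ∈ G.neighborFinset c, edgeDeriv G v lam c d
      = ∑ c, ∑ d ∈ G.neighborFinset c,
          ((1 - lam) * v c ^ 2 / (G.degree c : ℝ) + (1 - lam) * v d ^ 2 / (G.degree d : ℝ)
            - 2 * v c * (v d / Real.sqrt ((G.degree c : ℝ) * (G.degree d : ℝ)))) :=
        Finset.sum_congr rfl fun c _ => Finset.sum_congr rfl (expand c)
    _ = 0 := by
      simp only [Finset.sum_sub_distrib, Finset.sum_add_distrib]
      have h1 : ∀ c : V, ∑ _d ∈ G.neighborFinset c, (1 - lam) * v c ^ 2 / (G.degree c : ℝ)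
          = (1 - lam) * v c ^ 2 := by
        intro c
        rw [Finset.sum_const, SimpleGraph.card_neighborFinset_eq_degree, nsmul_eq_mul]
        field_simp [hdz c]
      have h2 : ∑ c, ∑ d ∈ G.neighborFinset c, (1 - lam) * v d ^ 2 / (G.degree d : ℝ)
          = ∑ c, (1 - lam) * v c ^ 2 := by
        rw [NL.adj_sum_comm]
        refine Finset.sum_congr rfl fun c _ => ?_
        rw [Finset.sum_const, SimpleGraph.card_neighborFinset_eq_degree, nsmul_eq_mul]
        field_simp [hdz c]
      have h3 : ∀ c : V, ∑ d ∈ G.neighborFinset c,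
          2 * v c * (v d / Real.sqrt ((G.degree c : ℝ) * (G.degree d : ℝ)))
          = 2 * v c * ((1 - lam) * v c) := by
        intro c
        rw [← Finset.mul_sum, NL.eigen_local G h c]
      simp only [h1, h2, h3]
      rw [← Finset.sum_add_distrib, ← Finset.sum_sub_distrib]
      refine Finset.sum_eq_zero fun c _ => by ring


/-- Auxiliary spectral weight functions. -/
noncomputable def NLh1 : ℝ → ℝ := fun t => if t = 0 then 0 else -((1 - t) / t ^ 2)

noncomputable def NLh2 : ℝ → ℝ := fun t => if t = 0 then 0 else 2 / t ^ 2

/-- Completeness of an orthonormal basis. -/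
lemma NL.complete (w : Fin (Fintype.card V) → V → ℝ)
    (horth : ∀ i j, (∑ z, w i z * w j z) = if i = j then 1 else 0) (x y : V) :
    ∑ i, w i x * w i y = if x = y then 1 else 0 := by
  classical
  set e : Fin (Fintype.card V) ≃ V := (Fintype.equivFin V).symm with he
  set M : Matrix (Fin (Fintype.card V)) (Fin (Fintype.card V)) ℝ :=
    Matrix.of fun i j => w i (e j) with hM
  have hMMT : M * Mᵀ = 1 := by
    ext i j
    have : (M * Mᵀ) i j = ∑ k, w i (e k) * w j (e k) := by
      simp [Matrix.mul_apply, hM]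
    rw [this, Equiv.sum_comp e (fun z => w i z * w j z), horth i j]
    simp [Matrix.one_apply]
  have hMTM : Mᵀ * M = 1 := mul_eq_one_comm.mp hMMT
  have h2 := congrFun (congrFun hMTM (e.symm x)) (e.symm y)
  have h3 : (Mᵀ * M) (e.symm x) (e.symm y) = ∑ i, w i x * w i y := by
    simp [Matrix.mul_apply, hM]
  rw [h3] at h2
  rw [h2, Matrix.one_apply]
  by_cases h : x = y
  · simp [h]
  · have : ¬ (e.symm x = e.symm y) := fun hc => h (e.symm.injective hc)
    simp [h, this]

/-- Moment identity: the spectral sums of powers give entries of matrix powers. -/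
lemma NL.moment (G : SimpleGraph V) [DecidableRel G.Adj]
    (w : Fin (Fintype.card V) → V → ℝ) (lam : Fin (Fintype.card V) → ℝ)
    (horth : ∀ i j, (∑ z, w i z * w j z) = if i = j then 1 else 0)
    (heig : ∀ i, (normLap G).mulVec (w i) = lam i • w i)
    (k : ℕ) (x y : V) :
    ∑ i, lam i ^ k * (w i x * w i y) = ((normLap G) ^ k) x y := by
  induction k generalizing x y with
  | zero => simp [NL.complete w horth x y, Matrix.one_apply]
  | succ k ih =>
    have key : ∀ i, lam i ^ (k + 1) * (w i x * w i y)
        = ∑ z, normLap G x z * (lam i ^ k * (w i z * w i y)) := by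
      intro i
      have h1 : lam i * w i x = ∑ z, normLap G x z * w i z := by
        have h0 : (normLap G).mulVec (w i) x = (lam i • w i) x := by rw [heig i]
        have h0' : (normLap G).mulVec (w i) x = ∑ z, normLap G x z * w i z := by
          simp [Matrix.mulVec, dotProduct]
        rw [h0'] at h0
        calc lam i * w i x = (lam i • w i) x := rfl
          _ = ∑ z, normLap G x z * w i z := h0.symm
      calc lam i ^ (k + 1) * (w i x * w i y)
          = lam i ^ k * ((lam i * w i x) * w i y) := by ring
        _ = lam i ^ k * ((∑ z, normLap G x z * w i z) * w i y) := by rw [h1]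
        _ = ∑ z, normLap G x z * (lam i ^ k * (w i z * w i y)) := by
            rw [Finset.sum_mul, Finset.mul_sum]
            exact Finset.sum_congr rfl fun z _ => by ring
    rw [Finset.sum_congr rfl (fun i _ => key i), Finset.sum_comm]
    have : ∀ z, ∑ i, normLap G x z * (lam i ^ k * (w i z * w i y))
        = normLap G x z * ((normLap G) ^ k) z y := by
      intro z
      rw [← Finset.mul_sum, ih z y]
    rw [Finset.sum_congr rfl (fun z _ => this z)]
    rw [pow_succ' (normLap G) k, Matrix.mul_apply]

/-- Polynomial moment identity. -/
lemma NL.poly_moment (G : SimpleGraph V) [DecidableRel G.Adj]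
    (w : Fin (Fintype.card V) → V → ℝ) (lam : Fin (Fintype.card V) → ℝ)
    (horth : ∀ i j, (∑ z, w i z * w j z) = if i = j then 1 else 0)
    (heig : ∀ i, (normLap G).mulVec (w i) = lam i • w i)
    (p : Polynomial ℝ) (x y : V) :
    ∑ i, p.eval (lam i) * (w i x * w i y) = (Polynomial.aeval (normLap G) p) x y := by
  induction p using Polynomial.induction_on' with
  | add p q hp hq =>
    simp only [Polynomial.eval_add, add_mul, Finset.sum_add_distrib, hp, hq, map_add,
      Matrix.add_apply]
  | monomial k a =>
    have haev : (Polynomial.aeval (normLap G)) (Polynomial.monomial k a)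
        = a • (normLap G) ^ k := by
      rw [Polynomial.aeval_monomial, Algebra.algebraMap_eq_smul_one, smul_mul_assoc, one_mul]
    rw [haev, Matrix.smul_apply, smul_eq_mul, ← NL.moment G w lam horth heig k x y,
      Finset.mul_sum]
    exact Finset.sum_congr rfl fun i _ => by rw [Polynomial.eval_monomial]; ring

/-- Spectral sums are independent of the choice of orthonormal eigenbasis. -/
lemma NL.spectral_indep (G : SimpleGraph V) [DecidableRel G.Adj]
    (w w' : Fin (Fintype.card V) → V → ℝ) (lam : Fin (Fintype.card V) → ℝ)
    (horth : ∀ i j, (∑ z, w i z * w j z) = if i = j then 1 else 0)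
    (heig : ∀ i, (normLap G).mulVec (w i) = lam i • w i)
    (horth' : ∀ i j, (∑ z, w' i z * w' j z) = if i = j then 1 else 0)
    (heig' : ∀ i, (normLap G).mulVec (w' i) = lam i • w' i)
    (h : ℝ → ℝ) (x y : V) :
    ∑ i, h (lam i) * (w i x * w i y) = ∑ i, h (lam i) * (w' i x * w' i y) := by
  classical
  set S : Finset ℝ := Finset.image lam Finset.univ with hS
  set p : Polynomial ℝ := Lagrange.interpolate S id h with hpdef
  have hp : ∀ i, p.eval (lam i) = h (lam i) := by
    intro i
    have := Lagrange.eval_interpolate_at_node (v := id) (r := h) (s := S)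
      (Set.injOn_id _) (Finset.mem_image_of_mem lam (Finset.mem_univ i))
    exact this
  calc ∑ i, h (lam i) * (w i x * w i y)
      = ∑ i, p.eval (lam i) * (w i x * w i y) :=
        Finset.sum_congr rfl fun i _ => by rw [hp i]
    _ = (Polynomial.aeval (normLap G) p) x y := NL.poly_moment G w lam horth heig p x y
    _ = ∑ i, p.eval (lam i) * (w' i x * w' i y) :=
        (NL.poly_moment G w' lam horth' heig' p x y).symm
    _ = ∑ i, h (lam i) * (w' i x * w' i y) :=
        Finset.sum_congr rfl fun i _ => by rw [hp i]

/-- Spectral sums are invariant under graph automorphisms. -/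
lemma NL.auto_invariant (G : SimpleGraph V) [DecidableRel G.Adj]
    (w : Fin (Fintype.card V) → V → ℝ) (lam : Fin (Fintype.card V) → ℝ)
    (horth : ∀ i j, (∑ z, w i z * w j z) = if i = j then 1 else 0)
    (heig : ∀ i, (normLap G).mulVec (w i) = lam i • w i)
    (φ : G ≃g G) (h : ℝ → ℝ) (x y : V) :
    ∑ i, h (lam i) * (w i (φ x) * w i (φ y)) = ∑ i, h (lam i) * (w i x * w i y) := by
  classical
  set w' : Fin (Fintype.card V) → V → ℝ := fun i z => w i (φ z) with hw'
  have horth' : ∀ i j, (∑ z, w' i z * w' j z) = if i = j then 1 else 0 := by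
    intro i j
    rw [← horth i j]
    exact Equiv.sum_comp φ.toEquiv (fun z => w i z * w j z)
  have heig' : ∀ i, (normLap G).mulVec (w' i) = lam i • w' i := by
    intro i
    funext c
    have h1 : (normLap G).mulVec (w' i) c = ∑ z, normLap G c z * w i (φ z) := by
      simp [Matrix.mulVec, dotProduct, hw']
    have h2 : ∑ z, normLap G c z * w i (φ z) = ∑ z, normLap G (φ c) z * w i z := by
      rw [← Equiv.sum_comp φ.toEquiv (fun z => normLap G (φ c) z * w i z)]
      refine Finset.sum_congr rfl fun z _ => ?_
      rw [show ((φ.toEquiv z : V)) = φ z from rfl, NL.normLap_map G φ c z]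
    have h3 : ∑ z, normLap G (φ c) z * w i z = (normLap G).mulVec (w i) (φ c) := by
      simp [Matrix.mulVec, dotProduct]
    rw [h1, h2, h3, heig i]
    simp [hw']
  exact NL.spectral_indep G w' w lam horth' heig' horth heig h x y

theorem edge_transitive_kemeny_derivative_zero
    (G : SimpleGraph V) [DecidableRel G.Adj]
    (hdeg : ∀ z : V, 0 < G.degree z)
    (hET : ∀ ⦃a b c d : V⦄, G.Adj a b → G.Adj c d →
      ∃ φ : G ≃g G, s(φ a, φ b) = s(c, d))
    (w : Fin (Fintype.card V) → V → ℝ) (lam : Fin (Fintype.card V) → ℝ)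
    (horth : ∀ i j, (∑ z, w i z * w j z) = if i = j then 1 else 0)
    (heig : ∀ i, (normLap G).mulVec (w i) = lam i • w i)
    (x y : V) (hxy : G.Adj x y) :
    kemenyDeriv G w lam x y = 0 := by
  classical
  -- Decomposition of `kemenyDeriv` into three spectral sums.
  have hsum : ∀ a b : V, kemenyDeriv G w lam a b
      = (∑ i, NLh1 (lam i) * (w i a * w i a)) / (G.degree a : ℝ)
      + (∑ i, NLh1 (lam i) * (w i b * w i b)) / (G.degree b : ℝ)
      + (∑ i, NLh2 (lam i) * (w i a * w i b))
          / Real.sqrt ((G.degree a : ℝ) * (G.degree b : ℝ)) := by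
    intro a b
    unfold kemenyDeriv edgeDeriv
    rw [Finset.sum_div, Finset.sum_div, Finset.sum_div, ← Finset.sum_add_distrib,
      ← Finset.sum_add_distrib]
    refine Finset.sum_congr rfl fun i _ => ?_
    by_cases hl : lam i = 0
    · simp [hl, NLh1, NLh2]
    · simp only [NLh1, NLh2, if_neg hl]
      ring
  -- Invariance under automorphisms.
  have hinv : ∀ (φ : G ≃g G) (a b : V),
      kemenyDeriv G w lam (φ a) (φ b) = kemenyDeriv G w lam a b := by
    intro φ a b
    rw [hsum (φ a) (φ b), hsum a b, NL.degree_map G φ a, NL.degree_map G φ b,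
      NL.auto_invariant G w lam horth heig φ NLh1 a a,
      NL.auto_invariant G w lam horth heig φ NLh1 b b,
      NL.auto_invariant G w lam horth heig φ NLh2 a b]
  -- Symmetry in the two endpoints.
  have hsymm : ∀ a b : V, kemenyDeriv G w lam a b = kemenyDeriv G w lam b a := by
    intro a b
    unfold kemenyDeriv edgeDeriv
    refine Finset.sum_congr rfl fun i _ => ?_
    rw [mul_comm ((G.degree b : ℝ)) ((G.degree a : ℝ))]
    by_cases hl : lam i = 0
    · simp [hl]
    · simp only [if_neg hl]
      ring
  -- `kemenyDeriv` is constant on edges.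
  have hconst : ∀ c d : V, G.Adj c d →
      kemenyDeriv G w lam c d = kemenyDeriv G w lam x y := by
    intro c d hcd
    obtain ⟨φ, hφ⟩ := hET hcd hxy
    rw [Sym2.eq_iff] at hφ
    rcases hφ with ⟨h1, h2⟩ | ⟨h1, h2⟩
    · rw [← hinv φ c d, h1, h2]
    · rw [← hinv φ c d, h1, h2, hsymm]
  -- The sum over all ordered adjacent pairs vanishes.
  have hsum0 : ∑ c, ∑ d ∈ G.neighborFinset c, kemenyDeriv G w lam c d = 0 := by
    unfold kemenyDeriv
    rw [Finset.sum_congr rfl fun c (_ : c ∈ Finset.univ) => Finset.sum_comm, Finset.sum_comm]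
    refine Finset.sum_eq_zero fun i _ => ?_
    by_cases hl : lam i = 0
    · simp [hl]
    · simp only [if_neg hl, ← Finset.mul_sum]
      rw [NL.F_sum_zero G hdeg (heig i), mul_zero]
  -- Counting: the sum equals `(Σ degrees) * kemenyDeriv x y`.
  have hcount : ∑ c, ∑ d ∈ G.neighborFinset c, kemenyDeriv G w lam c d
      = (∑ c, (G.degree c : ℝ)) * kemenyDeriv G w lam x y := by
    rw [Finset.sum_mul]
    refine Finset.sum_congr rfl fun c _ => ?_
    rw [Finset.sum_congr rfl fun d hd =>
        hconst c d ((SimpleGraph.mem_neighborFinset G c d).mp hd),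
      Finset.sum_const, SimpleGraph.card_neighborFinset_eq_degree, nsmul_eq_mul]
  have hpos : (0 : ℝ) < ∑ c, (G.degree c : ℝ) :=
    Finset.sum_pos (fun c _ => by exact_mod_cast hdeg c) ⟨x, Finset.mem_univ x⟩
  rw [hcount] at hsum0
  exact (mul_eq_zero.mp hsum0).resolve_left hpos.ne'
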